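/- arXiv:1907.12657 — 2 statements merged into one kernel-verified Lean document; each statement's English description precedes it below -/
import Mathlib

section
/- Let a, b be positive integers and (k1,k2) ∈ ℤ²_{≥0}. Then in ℚ[x,y,z] modulo the ideal (ax+by): ∑_{(i,j)∈S_{a,b}\{(0,0)}} (a!/(a-i)!)·(b!/(b-j)!)·binom(k1+i,k1)·binom(k2+j,k2)·C(k1+i,k2+j,ℓ) ≡ 0 for every ℓ ≥ 0, where S_{a,b} = {(i,j) : 0≤i≤a, 0≤j≤b}. -/
/-- Stirling numbers of the second kind. -/
def stirling2 : ℕ → ℕ → ℕ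
  | 0, 0 => 1
  | 0, _ + 1 => 0
  | _ + 1, 0 => 0
  | n + 1, k + 1 => stirling2 n k + (k + 1) * stirling2 n (k + 1)

open MvPolynomial in
/-- The polynomial `C(k1,k2,ℓ)`, here with coefficients in `ℚ`. -/
noncomputable def Cpoly (k1 k2 l : ℕ) : MvPolynomial (Fin 3) ℚ :=
  ∑ i1 ∈ Finset.range (l + 1), ∑ i2 ∈ Finset.range (l + 1 - i1),
    (MvPolynomial.C ((l.choose i1 * (l - i1).choose i2
        * stirling2 i1 k1 * stirling2 i2 k2 : ℕ) : ℚ)) *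
      X 0 ^ i1 * X 1 ^ i2 * X 2 ^ (l - i1 - i2)

open MvPolynomial in
/-- `A_{ij} = i·x + j·y + z`. -/
noncomputable def Apoly (i j : ℕ) : MvPolynomial (Fin 3) ℚ :=
  (i : MvPolynomial (Fin 3) ℚ) * X 0 + (j : MvPolynomial (Fin 3) ℚ) * X 1 + X 2

lemma stirling2_zero_succ (k : ℕ) : stirling2 0 (k+1) = 0 := rfl
lemma stirling2_succ_zero (n : ℕ) : stirling2 (n+1) 0 = 0 := rfl
lemma stirling2_succ_succ (n k : ℕ) :
    stirling2 (n+1) (k+1) = stirling2 n k + (k + 1) * stirling2 n (k + 1) := rfl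

lemma stirling2_sum (n : ℕ) : ∀ k : ℕ,
    ∑ p ∈ Finset.range n, ((n.choose p : ℚ) * stirling2 p k) =
      (k + 1) * stirling2 n (k + 1) := by
  induction n with
  | zero => intro k; simp [stirling2_zero_succ]
  | succ n ih =>
    intro k
    rw [Finset.sum_range_succ']
    have hB : ∑ p ∈ Finset.range n, ((n.choose (p+1) : ℚ) * stirling2 (p+1) k)
        = (k + 1) * stirling2 n (k + 1) + (n.choose n : ℚ) * stirling2 n k
          - (n.choose 0 : ℚ) * stirling2 0 k := by
      have h1 : ∑ p ∈ Finset.range (n+1), ((n.choose p : ℚ) * stirling2 p k)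
          = ∑ p ∈ Finset.range n, ((n.choose (p+1) : ℚ) * stirling2 (p+1) k)
            + (n.choose 0 : ℚ) * stirling2 0 k := Finset.sum_range_succ' _ _
      rw [Finset.sum_range_succ, ih k] at h1
      linarith [h1]
    have hsplit : ∀ p, (((n+1).choose (p+1) : ℚ) * stirling2 (p+1) k)
        = (n.choose p : ℚ) * stirling2 (p+1) k + (n.choose (p+1) : ℚ) * stirling2 (p+1) k := by
      intro p
      rw [Nat.choose_succ_succ]
      push_cast
      ring
    rw [Finset.sum_congr rfl fun p _ => hsplit p, Finset.sum_add_distrib, hB]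
    have hA : ∑ p ∈ Finset.range n, ((n.choose p : ℚ) * stirling2 (p+1) k)
        = (k : ℚ) * stirling2 (n+1) (k+1) := by
      cases k with
      | zero => simp [stirling2_succ_zero]
      | succ k' =>
        have hexp : ∀ p, ((stirling2 (p+1) (k'+1) : ℚ))
            = stirling2 p k' + (k'+1) * stirling2 p (k'+1) := by
          intro p; rw [stirling2_succ_succ]; push_cast; ring
        have : ∑ p ∈ Finset.range n, ((n.choose p : ℚ) * stirling2 (p+1) (k'+1))
            = ∑ p ∈ Finset.range n, ((n.choose p : ℚ) * stirling2 p k'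
                + (k'+1) * ((n.choose p : ℚ) * stirling2 p (k'+1))) := by
          refine Finset.sum_congr rfl fun p _ => ?_
          rw [hexp p]; ring
        rw [this, Finset.sum_add_distrib, ← Finset.mul_sum, ih k', ih (k'+1),
          stirling2_succ_succ n (k'+1)]
        push_cast
        ring
    have hrec : (stirling2 (n+1) (k+1) : ℚ) = stirling2 n k + (k+1) * stirling2 n (k+1) := by
      rw [stirling2_succ_succ]; push_cast; ring
    simp only [Nat.choose_zero_right, Nat.choose_self, Nat.cast_one, one_mul]
    linear_combination hA - hrec

open PowerSeries in
lemma exp_sub_one_eq_mk (A : Type*) [CommRing A] [Algebra ℚ A] :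
    PowerSeries.exp A - 1 =
      PowerSeries.mk (fun q => if q = 0 then 0 else algebraMap ℚ A (1 / q.factorial)) := by
  ext n
  cases n with
  | zero => simp
  | succ m => simp [PowerSeries.coeff_one]

open PowerSeries in
lemma exp_sub_one_pow (A : Type*) [CommRing A] [Algebra ℚ A] (k : ℕ) :
    (PowerSeries.exp A - 1) ^ k =
      PowerSeries.mk (fun n =>
        algebraMap ℚ A (k.factorial * stirling2 n k / n.factorial)) := by
  induction k with
  | zero =>
    ext n
    cases n with
    | zero => simp [stirling2]
    | succ m => simp [stirling2_zero_succ, stirling2_succ_zero, PowerSeries.coeff_one]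
  | succ k ih =>
    rw [pow_succ, ih, exp_sub_one_eq_mk]
    ext n
    rw [PowerSeries.coeff_mk, PowerSeries.coeff_mul,
      Finset.Nat.sum_antidiagonal_eq_sum_range_succ_mk, Finset.sum_range_succ]
    simp only [PowerSeries.coeff_mk, Nat.sub_self, if_pos rfl, mul_zero, add_zero]
    have hterm : ∀ p ∈ Finset.range n,
        (algebraMap ℚ A (k.factorial * stirling2 p k / p.factorial)) *
          (if n - p = 0 then 0 else algebraMap ℚ A (1 / (n - p).factorial))
        = algebraMap ℚ A ((n.choose p : ℚ) * stirling2 p k * k.factorial / n.factorial) := by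
      intro p hp
      have hp' : p < n := Finset.mem_range.mp hp
      rw [if_neg (by omega), ← map_mul]
      congr 1
      have hc : ((n.choose p : ℚ) * p.factorial * (n - p).factorial) = n.factorial := by
        exact_mod_cast congrArg (Nat.cast : ℕ → ℚ)
          (Nat.choose_mul_factorial_mul_factorial hp'.le)
      have h1 : (p.factorial : ℚ) ≠ 0 := Nat.cast_ne_zero.mpr p.factorial_ne_zero
      have h2 : ((n - p).factorial : ℚ) ≠ 0 := Nat.cast_ne_zero.mpr (n - p).factorial_ne_zero
      have h3 : (n.factorial : ℚ) ≠ 0 := Nat.cast_ne_zero.mpr n.factorial_ne_zero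
      field_simp
      linear_combination (-(stirling2 p k : ℚ)) * hc
    rw [Finset.sum_congr rfl hterm, ← map_sum]
    congr 1
    have : ∑ p ∈ Finset.range n, ((n.choose p : ℚ) * stirling2 p k * k.factorial / n.factorial)
        = (∑ p ∈ Finset.range n, ((n.choose p : ℚ) * stirling2 p k))
            * k.factorial / n.factorial := by
      rw [Finset.sum_mul, Finset.sum_div]
    rw [this, stirling2_sum n k, Nat.factorial_succ]
    push_cast
    ring

open MvPolynomial in
noncomputable def CpolyGen (k1 k2 l : ℕ) (u : MvPolynomial (Fin 3) ℚ) : MvPolynomial (Fin 3) ℚ :=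
  ∑ i1 ∈ Finset.range (l + 1), ∑ i2 ∈ Finset.range (l + 1 - i1),
    (MvPolynomial.C ((l.choose i1 * (l - i1).choose i2
        * stirling2 i1 k1 * stirling2 i2 k2 : ℕ) : ℚ)) *
      X 0 ^ i1 * X 1 ^ i2 * u ^ (l - i1 - i2)

abbrev Rq : Type := MvPolynomial (Fin 3) ℚ

open PowerSeries in
noncomputable def PSgen (k1 k2 : ℕ) (u : Rq) : PowerSeries Rq :=
  rescale (MvPolynomial.X 0) ((exp Rq - 1) ^ k1) *
    (rescale (MvPolynomial.X 1) ((exp Rq - 1) ^ k2) * rescale u (exp Rq))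


open MvPolynomial in
lemma regroupC (q1 a b c q2 d : ℚ) (v w u' : Rq)
    (hq : q1 * (a * (b * c)) = q2 * d) :
    MvPolynomial.C q1 * (v * MvPolynomial.C a * (w * MvPolynomial.C b *
        (u' * MvPolynomial.C c)))
      = MvPolynomial.C q2 * (MvPolynomial.C d * v * w * u') := by
  have h : (MvPolynomial.C q1 * (MvPolynomial.C a * (MvPolynomial.C b * MvPolynomial.C c)) : Rq)
      = MvPolynomial.C q2 * MvPolynomial.C d := by
    rw [← map_mul, ← map_mul, ← map_mul, hq, map_mul]
  calc MvPolynomial.C q1 * (v * MvPolynomial.C a * (w * MvPolynomial.C b *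
        (u' * MvPolynomial.C c)))
      = (MvPolynomial.C q1 * (MvPolynomial.C a * (MvPolynomial.C b * MvPolynomial.C c)))
          * (v * w * u') := by ring
    _ = (MvPolynomial.C q2 * MvPolynomial.C d) * (v * w * u') := by rw [h]
    _ = MvPolynomial.C q2 * (MvPolynomial.C d * v * w * u') := by ring

open PowerSeries MvPolynomial in
lemma claimA (k1 k2 l : ℕ) (u : Rq) :
    MvPolynomial.C ((l.factorial : ℚ)) * PowerSeries.coeff (R := Rq) l (PSgen k1 k2 u)
      = MvPolynomial.C ((k1.factorial * k2.factorial : ℚ)) * CpolyGen k1 k2 l u := by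
  rw [PSgen, PowerSeries.coeff_mul, Finset.Nat.sum_antidiagonal_eq_sum_range_succ_mk,
    CpolyGen, Finset.mul_sum, Finset.mul_sum]
  refine Finset.sum_congr rfl fun i1 h1 => ?_
  have h1' : i1 ≤ l := Nat.lt_succ_iff.mp (Finset.mem_range.mp h1)
  rw [PowerSeries.coeff_mul, Finset.Nat.sum_antidiagonal_eq_sum_range_succ_mk]
  have hr : l + 1 - i1 = (l - i1) + 1 := by omega
  rw [hr, Finset.mul_sum, Finset.mul_sum, Finset.mul_sum]
  refine Finset.sum_congr rfl fun i2 h2 => ?_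
  have h2' : i2 ≤ l - i1 := Nat.lt_succ_iff.mp (Finset.mem_range.mp h2)
  simp only [coeff_rescale, exp_sub_one_pow, PowerSeries.coeff_mk, PowerSeries.coeff_exp,
    MvPolynomial.algebraMap_eq]
  have hq : (l.factorial : ℚ) * ((k1.factorial * stirling2 i1 k1 / i1.factorial)
        * ((k2.factorial * stirling2 i2 k2 / i2.factorial) * (1 / (l - i1 - i2).factorial)))
      = (k1.factorial * k2.factorial : ℚ) *
          ((l.choose i1 * (l - i1).choose i2 * stirling2 i1 k1 * stirling2 i2 k2 : ℕ) : ℚ) := by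
    rw [Nat.cast_mul, Nat.cast_mul, Nat.cast_mul, Nat.cast_choose ℚ h1', Nat.cast_choose ℚ h2']
    have e1 : (i1.factorial : ℚ) ≠ 0 := Nat.cast_ne_zero.mpr (Nat.factorial_ne_zero _)
    have e2 : (i2.factorial : ℚ) ≠ 0 := Nat.cast_ne_zero.mpr (Nat.factorial_ne_zero _)
    have e3 : ((l - i1 - i2).factorial : ℚ) ≠ 0 := Nat.cast_ne_zero.mpr (Nat.factorial_ne_zero _)
    have e4 : ((l - i1).factorial : ℚ) ≠ 0 := Nat.cast_ne_zero.mpr (Nat.factorial_ne_zero _)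
    have hsub : l - i1 - i2 = (l - i1) - i2 := rfl
    rw [hsub]
    field_simp
  exact regroupC _ _ _ _ _ _ _ _ _ hq

open PowerSeries in
lemma binom_sum (A : Type*) [CommRing A] [Algebra ℚ A] (k c : ℕ) :
    ∑ i ∈ Finset.range (c+1), ((c.choose i : ℕ) : PowerSeries A) * (exp A - 1)^(k+i)
      = (exp A - 1)^k * (exp A)^c := by
  have he : exp A = (exp A - 1) + 1 := by ring
  calc ∑ i ∈ Finset.range (c+1), ((c.choose i : ℕ) : PowerSeries A) * (exp A - 1)^(k+i)
      = ∑ i ∈ Finset.range (c+1),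
          (exp A - 1)^k * ((exp A - 1)^i * 1^(c-i) * ((c.choose i : ℕ) : PowerSeries A)) := by
        refine Finset.sum_congr rfl fun i _ => ?_
        rw [one_pow, pow_add]; ring
    _ = (exp A - 1)^k * ((exp A - 1) + 1)^c := by rw [add_pow, ← Finset.mul_sum]
    _ = (exp A - 1)^k * (exp A)^c := by rw [← he]

open PowerSeries MvPolynomial in
lemma claimB (a b k1 k2 : ℕ) :
    ∑ p ∈ Finset.range (a+1) ×ˢ Finset.range (b+1),
        ((a.choose p.1 * b.choose p.2 : ℕ) : PowerSeries Rq) *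
          PSgen (k1 + p.1) (k2 + p.2) (MvPolynomial.X 2)
      = PSgen k1 k2 ((a : Rq) * MvPolynomial.X 0 + (b : Rq) * MvPolynomial.X 1
          + MvPolynomial.X 2) := by
  have hresc : rescale ((a : Rq) * MvPolynomial.X 0 + (b : Rq) * MvPolynomial.X 1
        + MvPolynomial.X 2) (exp Rq)
      = rescale (MvPolynomial.X 0) ((exp Rq)^a) *
          (rescale (MvPolynomial.X 1) ((exp Rq)^b) * rescale (MvPolynomial.X 2) (exp Rq)) := by
    rw [exp_pow_eq_rescale_exp, exp_pow_eq_rescale_exp, rescale_rescale, rescale_rescale,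
      exp_mul_exp_eq_exp_add, exp_mul_exp_eq_exp_add, add_assoc]
  rw [PSgen, hresc]
  have hcollect :
      rescale (MvPolynomial.X 0) ((exp Rq - 1)^k1) *
        (rescale (MvPolynomial.X 1) ((exp Rq - 1)^k2) *
          (rescale (MvPolynomial.X 0) ((exp Rq)^a) *
            (rescale (MvPolynomial.X 1) ((exp Rq)^b) * rescale (MvPolynomial.X 2) (exp Rq))))
      = rescale (MvPolynomial.X 0) ((exp Rq - 1)^k1 * (exp Rq)^a) *
          (rescale (MvPolynomial.X 1) ((exp Rq - 1)^k2 * (exp Rq)^b) *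
            rescale (MvPolynomial.X 2) (exp Rq)) := by
    rw [map_mul, map_mul]; ring
  rw [hcollect, ← binom_sum Rq k1 a, ← binom_sum Rq k2 b, map_sum, map_sum]
  rw [Finset.sum_mul, Finset.sum_product]
  refine Finset.sum_congr rfl fun i hi => ?_
  rw [Finset.sum_mul, Finset.mul_sum]
  refine Finset.sum_congr rfl fun j hj => ?_
  rw [PSgen]
  push_cast
  simp only [map_mul, map_natCast]
  ring
open PowerSeries MvPolynomial in
lemma claimM (a b k1 k2 l : ℕ) :
    ∑ p ∈ (Finset.range (a + 1) ×ˢ Finset.range (b + 1)),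
        (MvPolynomial.C ((a.descFactorial p.1 * b.descFactorial p.2
            * (k1 + p.1).choose k1 * (k2 + p.2).choose k2 : ℕ) : ℚ))
          * Cpoly (k1 + p.1) (k2 + p.2) l
      = CpolyGen k1 k2 l ((a : Rq) * MvPolynomial.X 0 + (b : Rq) * MvPolynomial.X 1
          + MvPolynomial.X 2) := by
  have hC : (MvPolynomial.C ((k1.factorial * k2.factorial : ℚ)) : Rq) ≠ 0 := by
    rw [Ne, MvPolynomial.C_eq_zero]
    positivity
  apply mul_left_cancel₀ hC
  rw [Finset.mul_sum]
  have hterm : ∀ p ∈ (Finset.range (a + 1) ×ˢ Finset.range (b + 1)),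
      MvPolynomial.C ((k1.factorial * k2.factorial : ℚ)) *
        ((MvPolynomial.C ((a.descFactorial p.1 * b.descFactorial p.2
            * (k1 + p.1).choose k1 * (k2 + p.2).choose k2 : ℕ) : ℚ))
          * Cpoly (k1 + p.1) (k2 + p.2) l)
      = MvPolynomial.C ((l.factorial : ℚ)) *
          (((a.choose p.1 * b.choose p.2 : ℕ) : Rq) *
            PowerSeries.coeff (R := Rq) l (PSgen (k1 + p.1) (k2 + p.2) (MvPolynomial.X 2))) := by
    rintro ⟨i, j⟩ _
    have hq : (k1.factorial * k2.factorial : ℚ) *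
          ((a.descFactorial i * b.descFactorial j
            * (k1 + i).choose k1 * (k2 + j).choose k2 : ℕ) : ℚ)
        = ((a.choose i * b.choose j : ℕ) : ℚ) *
            (((k1 + i).factorial * (k2 + j).factorial : ℚ)) := by
      have h1 : ((k1 + i).choose k1 * k1.factorial * i.factorial : ℚ)
          = ((k1 + i).factorial : ℚ) := by
        have hn : (k1 + i).choose k1 * k1.factorial * i.factorial = (k1 + i).factorial := by
          have := Nat.choose_mul_factorial_mul_factorial (Nat.le_add_right k1 i)
          simpa [Nat.add_sub_cancel_left] using this
        exact_mod_cast congrArg (Nat.cast : ℕ → ℚ) hn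
      have h2 : ((k2 + j).choose k2 * k2.factorial * j.factorial : ℚ)
          = ((k2 + j).factorial : ℚ) := by
        have hn : (k2 + j).choose k2 * k2.factorial * j.factorial = (k2 + j).factorial := by
          have := Nat.choose_mul_factorial_mul_factorial (Nat.le_add_right k2 j)
          simpa [Nat.add_sub_cancel_left] using this
        exact_mod_cast congrArg (Nat.cast : ℕ → ℚ) hn
      have hd1 : ((a.descFactorial i : ℕ) : ℚ) = (i.factorial : ℚ) * (a.choose i : ℚ) := by
        exact_mod_cast congrArg (Nat.cast : ℕ → ℚ) (Nat.descFactorial_eq_factorial_mul_choose a i)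
      have hd2 : ((b.descFactorial j : ℕ) : ℚ) = (j.factorial : ℚ) * (b.choose j : ℚ) := by
        exact_mod_cast congrArg (Nat.cast : ℕ → ℚ) (Nat.descFactorial_eq_factorial_mul_choose b j)
      push_cast
      rw [hd1, hd2, ← h1, ← h2]
      ring
    have hcpoly : Cpoly (k1 + i) (k2 + j) l = CpolyGen (k1 + i) (k2 + j) l (MvPolynomial.X 2) :=
      rfl
    calc MvPolynomial.C ((k1.factorial * k2.factorial : ℚ)) *
          ((MvPolynomial.C ((a.descFactorial i * b.descFactorial j
              * (k1 + i).choose k1 * (k2 + j).choose k2 : ℕ) : ℚ))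
            * Cpoly (k1 + i) (k2 + j) l)
        = MvPolynomial.C ((k1.factorial * k2.factorial : ℚ) *
              ((a.descFactorial i * b.descFactorial j
                * (k1 + i).choose k1 * (k2 + j).choose k2 : ℕ) : ℚ))
            * Cpoly (k1 + i) (k2 + j) l := by rw [← mul_assoc, ← map_mul]
      _ = MvPolynomial.C (((a.choose i * b.choose j : ℕ) : ℚ)) *
            (MvPolynomial.C ((((k1 + i).factorial * (k2 + j).factorial : ℚ))) *
              CpolyGen (k1 + i) (k2 + j) l (MvPolynomial.X 2)) := by
          rw [hq, map_mul, mul_assoc, hcpoly]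
      _ = MvPolynomial.C (((a.choose i * b.choose j : ℕ) : ℚ)) *
            (MvPolynomial.C ((l.factorial : ℚ)) *
              PowerSeries.coeff (R := Rq) l (PSgen (k1 + i) (k2 + j) (MvPolynomial.X 2))) := by
          rw [← claimA]
      _ = MvPolynomial.C ((l.factorial : ℚ)) *
            (((a.choose i * b.choose j : ℕ) : Rq) *
              PowerSeries.coeff (R := Rq) l (PSgen (k1 + i) (k2 + j) (MvPolynomial.X 2))) := by
          rw [map_natCast (MvPolynomial.C : ℚ →+* Rq)]
          ring
  rw [Finset.sum_congr rfl hterm, ← Finset.mul_sum]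
  have hco : ∑ p ∈ (Finset.range (a + 1) ×ˢ Finset.range (b + 1)),
        (((a.choose p.1 * b.choose p.2 : ℕ) : Rq) *
          PowerSeries.coeff (R := Rq) l (PSgen (k1 + p.1) (k2 + p.2) (MvPolynomial.X 2)))
      = PowerSeries.coeff (R := Rq) l (PSgen k1 k2 ((a : Rq) * MvPolynomial.X 0
          + (b : Rq) * MvPolynomial.X 1 + MvPolynomial.X 2)) := by
    rw [← claimB, map_sum]
    refine Finset.sum_congr rfl fun p _ => ?_
    rw [show ((a.choose p.1 * b.choose p.2 : ℕ) : PowerSeries Rq)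
        = PowerSeries.C (R := Rq) (((a.choose p.1 * b.choose p.2 : ℕ) : Rq)) from
          (map_natCast (PowerSeries.C (R := Rq)) _).symm,
      PowerSeries.coeff_C_mul]
  rw [hco, claimA]

open MvPolynomial in
theorem relation_mod_ax_add_by (a b : ℕ) (ha : 0 < a) (hb : 0 < b) (k1 k2 l : ℕ) :
    Ideal.Quotient.mk
        (Ideal.span {(a : MvPolynomial (Fin 3) ℚ) * X 0 + (b : MvPolynomial (Fin 3) ℚ) * X 1})
        (∑ p ∈ (Finset.range (a + 1) ×ˢ Finset.range (b + 1)).erase (0, 0),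
          (MvPolynomial.C ((a.descFactorial p.1 * b.descFactorial p.2
              * (k1 + p.1).choose k1 * (k2 + p.2).choose k2 : ℕ) : ℚ))
            * Cpoly (k1 + p.1) (k2 + p.2) l) = 0 := by
  rw [Ideal.Quotient.eq_zero_iff_mem]
  have hmem : ((0, 0) : ℕ × ℕ) ∈ Finset.range (a + 1) ×ˢ Finset.range (b + 1) := by
    simp
  have herase : ∑ p ∈ (Finset.range (a + 1) ×ˢ Finset.range (b + 1)).erase (0, 0),
        (MvPolynomial.C ((a.descFactorial p.1 * b.descFactorial p.2
            * (k1 + p.1).choose k1 * (k2 + p.2).choose k2 : ℕ) : ℚ))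
          * Cpoly (k1 + p.1) (k2 + p.2) l
      = (∑ p ∈ Finset.range (a + 1) ×ˢ Finset.range (b + 1),
          (MvPolynomial.C ((a.descFactorial p.1 * b.descFactorial p.2
              * (k1 + p.1).choose k1 * (k2 + p.2).choose k2 : ℕ) : ℚ))
            * Cpoly (k1 + p.1) (k2 + p.2) l) - Cpoly k1 k2 l := by
    rw [Finset.sum_erase_eq_sub hmem]
    congr 1
    simp
  rw [herase, claimM]
  have hxz : Cpoly k1 k2 l = CpolyGen k1 k2 l (MvPolynomial.X 2) := rfl
  rw [hxz, CpolyGen, CpolyGen, ← Finset.sum_sub_distrib]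
  refine Ideal.sum_mem _ fun i1 _ => ?_
  rw [← Finset.sum_sub_distrib]
  refine Ideal.sum_mem _ fun i2 _ => ?_
  rw [Ideal.mem_span_singleton]
  have hd : ((a : Rq) * MvPolynomial.X 0 + (b : Rq) * MvPolynomial.X 1) ∣
      (((a : Rq) * MvPolynomial.X 0 + (b : Rq) * MvPolynomial.X 1 + MvPolynomial.X 2) ^ (l - i1 - i2)
        - (MvPolynomial.X 2 : Rq) ^ (l - i1 - i2)) := by
    have := sub_dvd_pow_sub_pow
      ((a : Rq) * MvPolynomial.X 0 + (b : Rq) * MvPolynomial.X 1 + MvPolynomial.X 2)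
      (MvPolynomial.X 2) (l - i1 - i2)
    simpa using this
  have hfac : (MvPolynomial.C ((l.choose i1 * (l - i1).choose i2
        * stirling2 i1 k1 * stirling2 i2 k2 : ℕ) : ℚ)) * MvPolynomial.X 0 ^ i1
          * MvPolynomial.X 1 ^ i2 *
          ((a : Rq) * MvPolynomial.X 0 + (b : Rq) * MvPolynomial.X 1 + MvPolynomial.X 2)
            ^ (l - i1 - i2)
      - (MvPolynomial.C ((l.choose i1 * (l - i1).choose i2
          * stirling2 i1 k1 * stirling2 i2 k2 : ℕ) : ℚ)) * MvPolynomial.X 0 ^ i1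
            * MvPolynomial.X 1 ^ i2 * (MvPolynomial.X 2 : Rq) ^ (l - i1 - i2)
      = (MvPolynomial.C ((l.choose i1 * (l - i1).choose i2
          * stirling2 i1 k1 * stirling2 i2 k2 : ℕ) : ℚ)) * MvPolynomial.X 0 ^ i1
            * MvPolynomial.X 1 ^ i2 *
          (((a : Rq) * MvPolynomial.X 0 + (b : Rq) * MvPolynomial.X 1 + MvPolynomial.X 2)
              ^ (l - i1 - i2) - (MvPolynomial.X 2 : Rq) ^ (l - i1 - i2)) := by
    ring
  rw [hfac]
  exact Dvd.dvd.mul_left hd _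
end

section
/- Let a, b be positive integers and (k1,k2) ∈ ℤ²_{≥0} with k2 ≥ b. Then in ℚ[x,y,z] modulo the ideal (ax - by), for every ℓ ≥ 0: ∑_{j=1}^{a} (a!/(a-j)!)·binom(k1+j,k1)·C(k1+j, k2-b, ℓ) ≡ ∑_{j=1}^{b} (b!/(b-j)!)·binom(k2-b+j, k2-b)·C(k1, k2-b+j, ℓ). -/
noncomputable def Efun {M : Type*} [AddCommGroup M] [Module ℚ M] (a k : ℕ) (F : ℕ → M) : M :=
  ∑ m ∈ Finset.range (k + 1), (((-1 : ℚ) ^ (k + m)) * (k.choose m : ℚ)) • F (m + a)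

lemma Efun_succ {M : Type*} [AddCommGroup M] [Module ℚ M] (a k : ℕ) (F : ℕ → M) :
    Efun a (k + 1) F = Efun (a + 1) k F - Efun a k F := by
  unfold Efun
  rw [Finset.sum_range_succ'
    (fun m => (((-1 : ℚ) ^ (k + 1 + m)) * ((k+1).choose m : ℚ)) • F (m + a))]
  have h1 : ∀ m : ℕ, (((-1 : ℚ) ^ (k + 1 + (m+1))) * ((k+1).choose (m+1) : ℚ)) • F (m + 1 + a)
      = (((-1 : ℚ) ^ (k + m)) * (k.choose m : ℚ)) • F (m + (a+1))
        + (((-1 : ℚ) ^ (k + m)) * (k.choose (m+1) : ℚ)) • F (m + 1 + a) := by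
    intro m
    rw [Nat.choose_succ_succ, show m + 1 + a = m + (a+1) by ring,
      show k + 1 + (m+1) = (k + m) + 2 by ring, pow_add]
    push_cast
    module
  rw [Finset.sum_congr rfl (fun m _ => h1 m), Finset.sum_add_distrib]
  have h2 : ∑ m ∈ Finset.range (k+1),
        (((-1 : ℚ) ^ (k + m)) * (k.choose (m+1) : ℚ)) • F (m + 1 + a)
        + (((-1 : ℚ) ^ (k + 1 + 0)) * ((k+1).choose 0 : ℚ)) • F (0 + a)
      = - ∑ m ∈ Finset.range (k+1), (((-1 : ℚ) ^ (k + m)) * (k.choose m : ℚ)) • F (m + a) := by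
    rw [← Finset.sum_neg_distrib, Finset.sum_range_succ'
      (fun m => -((((-1 : ℚ) ^ (k + m)) * (k.choose m : ℚ)) • F (m + a)))]
    rw [Finset.sum_range_succ
      (fun m => (((-1 : ℚ) ^ (k + m)) * (k.choose (m+1) : ℚ)) • F (m + 1 + a))]
    congr 1
    · rw [Nat.choose_succ_self]
      push_cast
      rw [mul_zero, zero_smul, add_zero]
      apply Finset.sum_congr rfl
      intro m _
      rw [show k + (m+1) = (k+m) + 1 by ring, pow_succ]
      module
    · simp only [Nat.choose_zero_right, Nat.cast_one, pow_succ, Nat.add_zero, pow_zero]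
      module
  rw [add_assoc, h2]
  abel

lemma Efun_sum {M : Type*} [AddCommGroup M] [Module ℚ M] (a k : ℕ) (F : ℕ → M) :
    ∑ j ∈ Finset.range (a + 1), ((a.choose j : ℚ)) • Efun 0 (k + j) F = Efun a k F := by
  induction a generalizing k with
  | zero => simp
  | succ a ih =>
    rw [Finset.sum_range_succ'
      (fun j => (((a+1).choose j : ℚ)) • Efun 0 (k + j) F)]
    have h1 : ∀ j : ℕ, (((a+1).choose (j+1) : ℚ)) • Efun 0 (k + (j+1)) F
        = ((a.choose j : ℚ)) • Efun 0 ((k+1) + j) F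
          + ((a.choose (j+1) : ℚ)) • Efun 0 (k + (j+1)) F := by
      intro j
      rw [Nat.choose_succ_succ, show k + (j+1) = (k+1) + j by ring]
      push_cast
      module
    rw [Finset.sum_congr rfl (fun j _ => h1 j), Finset.sum_add_distrib]
    have h2 : ∑ j ∈ Finset.range (a+1), ((a.choose (j+1) : ℚ)) • Efun 0 (k + (j+1)) F
        + (((a+1).choose 0 : ℚ)) • Efun 0 (k + 0) F
        = ∑ j ∈ Finset.range (a+1), ((a.choose j : ℚ)) • Efun 0 (k + j) F := by
      rw [Finset.sum_range_succ
        (fun j => ((a.choose (j+1) : ℚ)) • Efun 0 (k + (j+1)) F),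
        Nat.choose_succ_self]
      simp only [Nat.cast_zero, zero_smul, add_zero, Nat.choose_zero_right, Nat.cast_one,
        one_smul, Nat.add_zero]
      rw [Finset.sum_range_succ' (fun j => ((a.choose j : ℚ)) • Efun 0 (k + j) F)]
      simp
    rw [add_assoc, h2, ih, ih, Efun_succ]
    abel

lemma alt_sum_zero (k : ℕ) :
    ∑ m ∈ Finset.range (k + 1 + 1), ((-1 : ℚ)) ^ m * ((k+1).choose m : ℚ) = 0 := by
  have := Int.alternating_sum_range_choose_of_ne (n := k + 1) (by omega)
  have h2 : ((∑ i ∈ Finset.range (k + 1 + 1), (-1 : ℤ) ^ i * ((k+1).choose i) : ℤ) : ℚ) = 0 := by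
    rw [this]; rfl
  rw [← h2]
  push_cast
  rfl

lemma stirling_sum (n : ℕ) : ∀ k : ℕ,
    Efun 0 k (fun m : ℕ => ((m : ℚ)) ^ n) = ((k.factorial * stirling2 n k : ℕ) : ℚ) := by
  induction n with
  | zero =>
    intro k
    match k with
    | 0 => simp [Efun, stirling2]
    | k + 1 =>
      have : ((k+1).factorial * stirling2 0 (k+1) : ℕ) = 0 := by
        simp [stirling2]
      rw [this, Nat.cast_zero]
      unfold Efun
      calc ∑ m ∈ Finset.range (k + 1 + 1), ((-1:ℚ) ^ (k + 1 + m) * ((k+1).choose m : ℚ)) • ((m:ℚ))^0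
          = (-1:ℚ)^(k+1) * ∑ m ∈ Finset.range (k + 1 + 1), ((-1:ℚ)) ^ m * ((k+1).choose m : ℚ) := by
            rw [Finset.mul_sum]
            apply Finset.sum_congr rfl
            intro m _
            rw [pow_zero, smul_eq_mul, pow_add]
            ring
        _ = 0 := by rw [alt_sum_zero]; ring
  | succ n ih =>
    intro k
    match k with
    | 0 => simp [Efun, stirling2]
    | k + 1 =>
      have hrhs : ((k+1).factorial * stirling2 (n+1) (k+1) : ℕ)
          = (k+1) * (k.factorial * stirling2 n k)
            + (k+1) * ((k+1).factorial * stirling2 n (k+1)) := by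
        show ((k+1).factorial * (stirling2 n k + (k + 1) * stirling2 n (k + 1))) = _
        rw [Nat.factorial_succ]
        ring
      rw [hrhs]
      unfold Efun
      simp only [Nat.add_zero]
      rw [Finset.sum_range_succ'
        (fun m => ((-1:ℚ) ^ (k + 1 + m) * ((k+1).choose m : ℚ)) • ((m:ℚ))^(n+1))]
      have h1 : ∀ m : ℕ, ((-1:ℚ) ^ (k + 1 + (m+1)) * ((k+1).choose (m+1) : ℚ)) • (((m+1:ℕ) : ℚ))^(n+1)
          = ((k+1 : ℚ)) * (((-1:ℚ) ^ (k + m) * ((k).choose m : ℚ)) • (((m+1:ℕ) : ℚ))^n) := by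
        intro m
        have hc : ((k+1).choose (m+1)) * (m+1) = (k+1) * k.choose m := by
          rw [← Nat.add_one_mul_choose_eq]
        have hc' : (((k+1).choose (m+1) : ℚ)) * ((m+1 : ℕ) : ℚ) = ((k+1 : ℚ)) * (k.choose m : ℚ) := by
          push_cast
          exact_mod_cast congrArg (Nat.cast : ℕ → ℚ) hc
        rw [show k + 1 + (m+1) = (k + m) + 2 by ring, pow_add]
        push_cast at hc' ⊢
        rw [pow_succ ((m:ℚ)+1) n]
        simp only [smul_eq_mul]
        linear_combination ((-1:ℚ)^(k+m) * ((m:ℚ)+1)^n) * hc'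
      rw [Finset.sum_congr rfl (fun m _ => h1 m)]
      rw [← Finset.mul_sum]
      have h2 : ∑ m ∈ Finset.range (k+1), ((-1:ℚ) ^ (k + m) * ((k).choose m : ℚ)) • (((m+1:ℕ) : ℚ))^n
          = Efun 1 k (fun m : ℕ => ((m : ℚ)) ^ n) := by
        apply Finset.sum_congr rfl
        intro m _
        norm_num
      rw [h2]
      have hz : ((-1:ℚ) ^ (k + 1 + 0) * ((k+1).choose 0 : ℚ)) • ((0:ℕ):ℚ) ^ (n + 1) = 0 := by
        norm_num
      rw [hz, add_zero]
      have h3 : Efun 1 k (fun m : ℕ => ((m:ℚ))^n)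
          = Efun 0 (k+1) (fun m : ℕ => ((m:ℚ))^n) + Efun 0 k (fun m : ℕ => ((m:ℚ))^n) := by
        rw [Efun_succ]
        abel
      rw [h3, ih, ih]
      push_cast
      ring

open MvPolynomial in
lemma Cpoly_eq (k1 k2 l : ℕ) : Cpoly k1 k2 l
    = ∑ p ∈ (Finset.range (l+1)).sigma (fun i => Finset.range (i+1)),
      ((l.choose p.1 * p.1.choose p.2 * stirling2 p.2 k1 * stirling2 (p.1 - p.2) k2 : ℕ) : ℚ)
        • (X 0 ^ p.2 * X 1 ^ (p.1 - p.2) * X 2 ^ (l - p.1)) := by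
  unfold Cpoly
  rw [Finset.sum_sigma' (Finset.range (l+1)) (fun i1 => Finset.range (l + 1 - i1))]
  refine Finset.sum_bij' (fun q _ => (⟨q.1 + q.2, q.1⟩ : Σ _ : ℕ, ℕ))
    (fun p _ => (⟨p.2, p.1 - p.2⟩ : Σ _ : ℕ, ℕ)) ?_ ?_ ?_ ?_ ?_
  · rintro ⟨i1, i2⟩ hq
    simp only [Finset.mem_sigma, Finset.mem_range] at hq
    refine Finset.mem_sigma.2 ⟨Finset.mem_range.2 ?_, Finset.mem_range.2 ?_⟩
    · show i1 + i2 < l + 1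
      omega
    · show i1 < (i1 + i2) + 1
      omega
  · rintro ⟨i, t⟩ hp
    simp only [Finset.mem_sigma, Finset.mem_range] at hp
    refine Finset.mem_sigma.2 ⟨Finset.mem_range.2 ?_, Finset.mem_range.2 ?_⟩
    · show t < l + 1
      omega
    · show i - t < l + 1 - t
      omega
  · rintro ⟨i1, i2⟩ hq
    simp only [Finset.mem_sigma, Finset.mem_range] at hq
    show (⟨i1, i1 + i2 - i1⟩ : Σ _ : ℕ, ℕ) = ⟨i1, i2⟩
    rw [Nat.add_sub_cancel_left]
  · rintro ⟨i, t⟩ hp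
    simp only [Finset.mem_sigma, Finset.mem_range] at hp
    show (⟨t + (i - t), t⟩ : Σ _ : ℕ, ℕ) = ⟨i, t⟩
    rw [Nat.add_sub_cancel' (by omega : t ≤ i)]
  · rintro ⟨i1, i2⟩ hq
    simp only [Finset.mem_sigma, Finset.mem_range] at hq
    show _ = ((l.choose (i1 + i2) * (i1 + i2).choose i1 * stirling2 i1 k1
        * stirling2 (i1 + i2 - i1) k2 : ℕ) : ℚ)
      • (MvPolynomial.X 0 ^ i1 * MvPolynomial.X 1 ^ (i1 + i2 - i1)
          * MvPolynomial.X 2 ^ (l - (i1 + i2)))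
    have h1 : i1 + i2 - i1 = i2 := by omega
    have h2 : l - i1 - i2 = l - (i1 + i2) := by omega
    have h3 : l.choose (i1 + i2) * (i1 + i2).choose i1
        = l.choose i1 * (l - i1).choose i2 := by
      have h := Nat.choose_mul (n := l) (k := i1 + i2) (s := i1) (by omega)
      rw [h, h1]
    rw [MvPolynomial.smul_eq_C_mul]
    simp only [h1, h2, h3]
    ring

open MvPolynomial in
lemma Apow (m1 m2 l : ℕ) : (Apoly m1 m2) ^ l
    = ∑ p ∈ (Finset.range (l+1)).sigma (fun i => Finset.range (i+1)),
      (((l.choose p.1 * p.1.choose p.2 : ℕ) : ℚ) * (m1 : ℚ) ^ p.2 * (m2 : ℚ) ^ (p.1 - p.2))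
        • (X 0 ^ p.2 * X 1 ^ (p.1 - p.2) * X 2 ^ (l - p.1)) := by
  unfold Apoly
  rw [add_pow, Finset.sum_sigma]
  apply Finset.sum_congr rfl
  intro i _
  rw [add_pow, Finset.sum_mul, Finset.sum_mul]
  apply Finset.sum_congr rfl
  intro t _
  rw [mul_pow, mul_pow, MvPolynomial.smul_eq_C_mul]
  push_cast
  simp only [map_mul, map_pow, MvPolynomial.C_eq_coe_nat]
  push_cast
  ring

open MvPolynomial in
lemma key1 (k1 k2 l : ℕ) :
    Efun 0 k1 (fun m1 => Efun 0 k2 (fun m2 => (Apoly m1 m2) ^ l))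
      = ((k1.factorial * k2.factorial : ℕ) : ℚ) • Cpoly k1 k2 l := by
  set P := (Finset.range (l+1)).sigma (fun i => Finset.range (i+1)) with hP
  have step1 : Efun 0 k1 (fun m1 => Efun 0 k2 (fun m2 => (Apoly m1 m2) ^ l))
      = ∑ m1 ∈ Finset.range (k1+1), ∑ m2 ∈ Finset.range (k2+1), ∑ p ∈ P,
          (((-1 : ℚ) ^ (k1 + m1)) * (k1.choose m1 : ℚ)
            * (((-1 : ℚ) ^ (k2 + m2)) * (k2.choose m2 : ℚ)
            * ((((l.choose p.1 * p.1.choose p.2 : ℕ) : ℚ) * (m1 : ℚ) ^ p.2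
                * (m2 : ℚ) ^ (p.1 - p.2)))))
          • ((X 0 : MvPolynomial (Fin 3) ℚ) ^ p.2 * X 1 ^ (p.1 - p.2) * X 2 ^ (l - p.1)) := by
    unfold Efun
    simp only [Nat.add_zero, Apow, Finset.smul_sum, smul_smul, hP]
  rw [step1]
  have step2 : ∀ m1 ∈ Finset.range (k1+1), (∑ m2 ∈ Finset.range (k2+1), ∑ p ∈ P,
      (((-1 : ℚ) ^ (k1 + m1)) * (k1.choose m1 : ℚ)
        * (((-1 : ℚ) ^ (k2 + m2)) * (k2.choose m2 : ℚ)
        * ((((l.choose p.1 * p.1.choose p.2 : ℕ) : ℚ) * (m1 : ℚ) ^ p.2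
            * (m2 : ℚ) ^ (p.1 - p.2)))))
      • ((X 0 : MvPolynomial (Fin 3) ℚ) ^ p.2 * X 1 ^ (p.1 - p.2) * X 2 ^ (l - p.1)))
      = ∑ p ∈ P, ∑ m2 ∈ Finset.range (k2+1),
      (((-1 : ℚ) ^ (k1 + m1)) * (k1.choose m1 : ℚ)
        * (((-1 : ℚ) ^ (k2 + m2)) * (k2.choose m2 : ℚ)
        * ((((l.choose p.1 * p.1.choose p.2 : ℕ) : ℚ) * (m1 : ℚ) ^ p.2
            * (m2 : ℚ) ^ (p.1 - p.2)))))
      • ((X 0 : MvPolynomial (Fin 3) ℚ) ^ p.2 * X 1 ^ (p.1 - p.2) * X 2 ^ (l - p.1)) := by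
    intro m1 _
    exact Finset.sum_comm
  rw [Finset.sum_congr rfl step2, Finset.sum_comm]
  rw [Cpoly_eq, Finset.smul_sum]
  apply Finset.sum_congr rfl
  rintro ⟨i, t⟩ hp
  simp only [hP, Finset.mem_sigma, Finset.mem_range] at hp
  have hs1 := stirling_sum t k1
  have hs2 := stirling_sum (i - t) k2
  unfold Efun at hs1 hs2
  simp only [Nat.add_zero] at hs1 hs2
  have inner : ∀ m1 : ℕ, ∑ m2 ∈ Finset.range (k2+1),
      (((-1 : ℚ) ^ (k1 + m1)) * (k1.choose m1 : ℚ)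
        * (((-1 : ℚ) ^ (k2 + m2)) * (k2.choose m2 : ℚ)
        * ((((l.choose i * i.choose t : ℕ) : ℚ) * (m1 : ℚ) ^ t
            * (m2 : ℚ) ^ (i - t)))))
      • ((X 0 : MvPolynomial (Fin 3) ℚ) ^ t * X 1 ^ (i - t) * X 2 ^ (l - i))
      = ((((-1 : ℚ) ^ (k1 + m1)) * (k1.choose m1 : ℚ) * (m1 : ℚ) ^ t
          * ((l.choose i * i.choose t : ℕ) : ℚ)
          * ((k2.factorial * stirling2 (i - t) k2 : ℕ) : ℚ))
        • ((X 0 : MvPolynomial (Fin 3) ℚ) ^ t * X 1 ^ (i - t) * X 2 ^ (l - i))) := by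
    intro m1
    rw [← hs2, Finset.mul_sum, Finset.sum_smul]
    apply Finset.sum_congr rfl
    intro m2 _
    rw [smul_eq_mul]
    congr 1
    ring
  rw [Finset.sum_congr rfl (fun m1 _ => inner m1)]
  have hbv : ∑ m1 ∈ Finset.range (k1+1),
        (((-1:ℚ)^(k1+m1) * ((k1.choose m1 : ℕ) : ℚ) * ((m1:ℚ))^t
          * ((l.choose i * i.choose t : ℕ) : ℚ)
          * ((k2.factorial * stirling2 (i-t) k2 : ℕ) : ℚ))
        • ((X 0 : MvPolynomial (Fin 3) ℚ) ^ t * X 1 ^ (i - t) * X 2 ^ (l - i)))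
      = ((∑ m1 ∈ Finset.range (k1+1), ((-1:ℚ)^(k1+m1) * ((k1.choose m1 : ℕ) : ℚ)) • ((m1:ℚ))^t)
          * (((l.choose i * i.choose t : ℕ) : ℚ)
            * ((k2.factorial * stirling2 (i-t) k2 : ℕ) : ℚ)))
        • ((X 0 : MvPolynomial (Fin 3) ℚ) ^ t * X 1 ^ (i - t) * X 2 ^ (l - i)) := by
    rw [Finset.sum_mul, Finset.sum_smul]
    apply Finset.sum_congr rfl
    intro m1 _
    rw [smul_eq_mul]
    congr 1
    ring
  rw [hbv, hs1]
  dsimp only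
  rw [smul_smul]
  congr 1
  push_cast
  ring

lemma Efun_map {M N : Type*} [AddCommGroup M] [Module ℚ M] [AddCommGroup N] [Module ℚ N]
    (f : M →ₗ[ℚ] N) (a k : ℕ) (F : ℕ → M) :
    f (Efun a k F) = Efun a k (fun m => f (F m)) := by
  unfold Efun
  rw [map_sum]
  simp [map_smul]

lemma Efun_linear {M : Type*} [AddCommGroup M] [Module ℚ M] {ι : Type*} (s : Finset ι)
    (c : ι → ℚ) (H : ι → ℕ → M) (k : ℕ) :
    ∑ j ∈ s, c j • Efun 0 k (H j) = Efun 0 k (fun m => ∑ j ∈ s, c j • H j m) := by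
  unfold Efun
  simp only [Finset.smul_sum]
  rw [Finset.sum_comm]
  apply Finset.sum_congr rfl
  intro m _
  simp only [Nat.add_zero, Finset.smul_sum]
  apply Finset.sum_congr rfl
  intro j _
  rw [smul_smul, smul_smul, mul_comm]

lemma coef_nat (kk aa j : ℕ) (e : ℕ) :
    (kk.factorial * e) * (aa.descFactorial j * (kk + j).choose kk)
      = aa.choose j * ((kk + j).factorial * e) := by
  rw [Nat.descFactorial_eq_factorial_mul_choose]
  have h : (kk + j).choose kk * kk.factorial * j.factorial = (kk + j).factorial := by
    have := Nat.choose_mul_factorial_mul_factorial (show kk ≤ kk + j by omega)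
    simpa using this
  calc (kk.factorial * e) * ((j.factorial * aa.choose j) * (kk + j).choose kk)
      = aa.choose j * (((kk + j).choose kk * kk.factorial * j.factorial) * e) := by ring
    _ = aa.choose j * ((kk + j).factorial * e) := by rw [h]

open MvPolynomial in
theorem relation_mod_ax_sub_by (a b : ℕ) (ha : 0 < a) (hb : 0 < b) (k1 k2 l : ℕ)
    (hk2 : b ≤ k2) :
    Ideal.Quotient.mk
        (Ideal.span {(a : MvPolynomial (Fin 3) ℚ) * X 0 - (b : MvPolynomial (Fin 3) ℚ) * X 1})
        (∑ j ∈ Finset.Icc 1 a,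
          (MvPolynomial.C ((a.descFactorial j * (k1 + j).choose k1 : ℕ) : ℚ))
            * Cpoly (k1 + j) (k2 - b) l) =
      Ideal.Quotient.mk
        (Ideal.span {(a : MvPolynomial (Fin 3) ℚ) * X 0 - (b : MvPolynomial (Fin 3) ℚ) * X 1})
        (∑ j ∈ Finset.Icc 1 b,
          (MvPolynomial.C ((b.descFactorial j * (k2 - b + j).choose (k2 - b) : ℕ) : ℚ))
            * Cpoly k1 (k2 - b + j) l) := by
  set k2' := k2 - b with hk2'
  set I : Ideal (MvPolynomial (Fin 3) ℚ) :=
    Ideal.span {(a : MvPolynomial (Fin 3) ℚ) * X 0 - (b : MvPolynomial (Fin 3) ℚ) * X 1} with hI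
  set π : MvPolynomial (Fin 3) ℚ →ₐ[ℚ] MvPolynomial (Fin 3) ℚ ⧸ I := Ideal.Quotient.mkₐ ℚ I
    with hπ
  have hmk : ∀ p : MvPolynomial (Fin 3) ℚ, Ideal.Quotient.mk I p = π p := by
    intro p
    rw [hπ, Ideal.Quotient.mkₐ_eq_mk]
  rw [hmk, hmk]
  -- the key congruence
  have hA : ∀ m1 m2 : ℕ, π ((Apoly (m1 + a) m2) ^ l) = π ((Apoly m1 (m2 + b)) ^ l) := by
    intro m1 m2
    have h1 : π (Apoly (m1 + a) m2) = π (Apoly m1 (m2 + b)) := by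
      rw [hπ, Ideal.Quotient.mkₐ_eq_mk, Ideal.Quotient.eq]
      have h2 : Apoly (m1 + a) m2 - Apoly m1 (m2 + b)
          = (a : MvPolynomial (Fin 3) ℚ) * X 0 - (b : MvPolynomial (Fin 3) ℚ) * X 1 := by
        unfold Apoly
        push_cast
        ring
      rw [h2, hI]
      exact Ideal.subset_span (Set.mem_singleton _)
    rw [map_pow, map_pow, h1]
  -- scalar cancellation setup
  have hq0 : ((k1.factorial * k2'.factorial : ℕ) : ℚ) ≠ 0 := by
    positivity
  set q : ℚ := ((k1.factorial * k2'.factorial : ℕ) : ℚ) with hqdef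
  suffices hsuff : q • π (∑ j ∈ Finset.Icc 1 a,
      (MvPolynomial.C ((a.descFactorial j * (k1 + j).choose k1 : ℕ) : ℚ))
        * Cpoly (k1 + j) k2' l)
      = q • π (∑ j ∈ Finset.Icc 1 b,
      (MvPolynomial.C ((b.descFactorial j * (k2' + j).choose k2' : ℕ) : ℚ))
        * Cpoly k1 (k2' + j) l) by
    have := congrArg (fun z => q⁻¹ • z) hsuff
    simpa [inv_smul_smul₀ hq0] using this
  -- notation for the quotient-level functions
  set F2 : ℕ → ℕ → MvPolynomial (Fin 3) ℚ ⧸ I := fun m1 m2 => π ((Apoly m1 m2) ^ l) with hF2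
  -- mapping Efun through the quotient
  have hmap : ∀ (u v : ℕ), π (Efun 0 u (fun m1 => Efun 0 v (fun m2 => (Apoly m1 m2) ^ l)))
      = Efun 0 u (fun m1 => Efun 0 v (fun m2 => F2 m1 m2)) := by
    intro u v
    have h1 := Efun_map π.toLinearMap 0 u
      (fun m1 => Efun 0 v (fun m2 => (Apoly m1 m2) ^ l))
    simp only [AlgHom.toLinearMap_apply] at h1
    rw [h1]
    apply congrArg
    funext m1
    have h2 := Efun_map π.toLinearMap 0 v (fun m2 => (Apoly m1 m2) ^ l)
    simp only [AlgHom.toLinearMap_apply] at h2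
    rw [h2]
  -- per-term computation, LHS
  have htermA : ∀ j : ℕ,
      q • π ((MvPolynomial.C ((a.descFactorial j * (k1 + j).choose k1 : ℕ) : ℚ))
          * Cpoly (k1 + j) k2' l)
        = (a.choose j : ℚ) • Efun 0 (k1 + j) (fun m1 => Efun 0 k2' (fun m2 => F2 m1 m2)) := by
    intro j
    rw [← MvPolynomial.smul_eq_C_mul, map_smul, smul_smul, ← hmap, ← map_smul, ← map_smul]
    apply congrArg
    rw [key1, smul_smul]
    congr 1
    rw [hqdef]
    have := congrArg (Nat.cast : ℕ → ℚ) (coef_nat k1 a j (k2'.factorial))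
    push_cast at this ⊢
    linear_combination this
  have htermB : ∀ j : ℕ,
      q • π ((MvPolynomial.C ((b.descFactorial j * (k2' + j).choose k2' : ℕ) : ℚ))
          * Cpoly k1 (k2' + j) l)
        = (b.choose j : ℚ) • Efun 0 k1 (fun m1 => Efun 0 (k2' + j) (fun m2 => F2 m1 m2)) := by
    intro j
    rw [← MvPolynomial.smul_eq_C_mul, map_smul, smul_smul, ← hmap, ← map_smul, ← map_smul]
    apply congrArg
    rw [key1, smul_smul]
    congr 1
    rw [hqdef]
    have := congrArg (Nat.cast : ℕ → ℚ) (coef_nat k2' b j (k1.factorial))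
    push_cast at this ⊢
    linear_combination this
  -- reduce both sides to range sums
  have hLHS : q • π (∑ j ∈ Finset.Icc 1 a,
      (MvPolynomial.C ((a.descFactorial j * (k1 + j).choose k1 : ℕ) : ℚ))
        * Cpoly (k1 + j) k2' l)
      = Efun a k1 (fun m1 => Efun 0 k2' (fun m2 => F2 m1 m2))
        - Efun 0 k1 (fun m1 => Efun 0 k2' (fun m2 => F2 m1 m2)) := by
    rw [map_sum, Finset.smul_sum, Finset.sum_congr rfl (fun j _ => htermA j)]
    have hsplit : ∑ j ∈ Finset.Icc 1 a,
        (a.choose j : ℚ) • Efun 0 (k1 + j) (fun m1 => Efun 0 k2' (fun m2 => F2 m1 m2))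
        = (∑ j ∈ Finset.range (a+1),
            (a.choose j : ℚ) • Efun 0 (k1 + j) (fun m1 => Efun 0 k2' (fun m2 => F2 m1 m2)))
          - (a.choose 0 : ℚ) • Efun 0 (k1 + 0) (fun m1 => Efun 0 k2' (fun m2 => F2 m1 m2)) := by
      rw [Finset.range_eq_Ico, Finset.sum_eq_sum_Ico_succ_bot (Nat.succ_pos a), Nat.succ_eq_add_one, Finset.Ico_add_one_right_eq_Icc]
      abel
    rw [hsplit, Efun_sum]
    simp
  have hRHS : q • π (∑ j ∈ Finset.Icc 1 b,
      (MvPolynomial.C ((b.descFactorial j * (k2' + j).choose k2' : ℕ) : ℚ))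
        * Cpoly k1 (k2' + j) l)
      = Efun 0 k1 (fun m1 => Efun b k2' (fun m2 => F2 m1 m2))
        - Efun 0 k1 (fun m1 => Efun 0 k2' (fun m2 => F2 m1 m2)) := by
    rw [map_sum, Finset.smul_sum, Finset.sum_congr rfl (fun j _ => htermB j)]
    have hsplit : ∑ j ∈ Finset.Icc 1 b,
        (b.choose j : ℚ) • Efun 0 k1 (fun m1 => Efun 0 (k2' + j) (fun m2 => F2 m1 m2))
        = (∑ j ∈ Finset.range (b+1),
            (b.choose j : ℚ) • Efun 0 k1 (fun m1 => Efun 0 (k2' + j) (fun m2 => F2 m1 m2)))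
          - (b.choose 0 : ℚ) • Efun 0 k1 (fun m1 => Efun 0 (k2' + 0) (fun m2 => F2 m1 m2)) := by
      rw [Finset.range_eq_Ico, Finset.sum_eq_sum_Ico_succ_bot (Nat.succ_pos b), Nat.succ_eq_add_one, Finset.Ico_add_one_right_eq_Icc]
      abel
    rw [hsplit, Efun_linear]
    have hinner : (fun m1 => ∑ j ∈ Finset.range (b+1),
        (b.choose j : ℚ) • Efun 0 (k2' + j) (fun m2 => F2 m1 m2))
        = fun m1 => Efun b k2' (fun m2 => F2 m1 m2) := by
      funext m1
      exact Efun_sum b k2' (fun m2 => F2 m1 m2)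
    rw [hinner]
    simp
  rw [hLHS, hRHS]
  -- final step: shift identity in the quotient
  have hfinal : Efun a k1 (fun m1 => Efun 0 k2' (fun m2 => F2 m1 m2))
      = Efun 0 k1 (fun m1 => Efun b k2' (fun m2 => F2 m1 m2)) := by
    unfold Efun
    apply Finset.sum_congr rfl
    intro m1 _
    apply congrArg
    apply Finset.sum_congr rfl
    intro m2 _
    apply congrArg
    simp only [Nat.add_zero, hF2]
    exact hA m1 m2
  rw [hfinal]
end
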